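/- arXiv:0804.1028 — 2 statements merged into one kernel-verified Lean document; each statement's English description precedes it below -/
import Mathlib

section
/- For every even positive integer n, -1 is a simple root of N_n(x), i.e., N_n(-1) = 0 but N_n'(-1) ≠ 0. -/
open Polynomial

/-- The n-th Narayana polynomial N_n(x) = Σ_{k=1}^n (1/n)·C(n,k-1)·C(n,k)·x^k. -/
noncomputable def narayanaPoly (n : ℕ) : Polynomial ℝ :=
  ∑ k ∈ Finset.Icc 1 n, C ((n.choose (k - 1) * n.choose k : ℝ) / n) * X ^ k

lemma narayana_coeff_one_sub_X_pow (m k : ℕ) :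
    ((1 - (X : Polynomial ℝ)) ^ m).coeff k = (-1) ^ k * (m.choose k : ℝ) := by
  have h : (1 - (X : Polynomial ℝ)) = -1 * (X + C (-1)) := by
    simp [C_neg]; ring
  rw [h, mul_pow, ← C_1, ← C_neg, ← C_pow, coeff_C_mul, coeff_X_add_C_pow]
  rcases le_or_gt k m with hk | hk
  · have : (-1 : ℝ) ^ m * ((-1) ^ (m - k)) = (-1) ^ k := by
      rw [← pow_add]
      have : m + (m - k) = 2 * (m - k) + k := by omega
      rw [this, pow_add, pow_mul]
      simp
    rw [← mul_assoc, this]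
  · simp [Nat.choose_eq_zero_of_lt hk]

lemma narayana_eval_neg_one (n : ℕ) (hn : 0 < n) (he : Even n) :
    (narayanaPoly n).eval (-1) = 0 := by
  unfold narayanaPoly
  rw [eval_finset_sum]
  refine Finset.sum_involution (fun k _ => n + 1 - k) ?_ ?_ ?_ ?_
  · intro k hk
    simp only [Finset.mem_Icc] at hk
    simp only [eval_mul, eval_C, eval_pow, eval_X]
    have h1 : (n + 1 - k) - 1 = n - k := by omega
    have h2 : n.choose (n + 1 - k - 1) = n.choose k := by
      rw [h1, Nat.choose_symm hk.2]
    have h3 : n.choose (n + 1 - k) = n.choose (k - 1) := by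
      have : n + 1 - k = n - (k - 1) := by omega
      rw [this, Nat.choose_symm (by omega)]
    have h4 : (-1 : ℝ) ^ (n + 1 - k) = -(-1) ^ k := by
      have e1 : (n + 1 - k) + k = n + 1 := by omega
      have e2 : (-1:ℝ) ^ ((n+1-k)+k) = -1 := by
        rw [e1, pow_succ, he.neg_one_pow]; ring
      rw [pow_add] at e2
      have hk2 : ((-1:ℝ) ^ k) * ((-1) ^ k) = 1 := by
        rw [← pow_add, ← two_mul, pow_mul]; simp
      calc (-1 : ℝ) ^ (n + 1 - k) = (-1) ^ (n + 1 - k) * ((-1) ^ k * (-1) ^ k) := by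
            rw [hk2, mul_one]
        _ = -(-1) ^ k := by rw [← mul_assoc, e2]; ring
    rw [h2, h3, h4]
    ring
  · intro k hk h
    simp only [Finset.mem_Icc] at hk
    obtain ⟨m, hm⟩ := he
    omega
  · intro k hk
    simp only [Finset.mem_Icc] at hk ⊢
    omega
  · intro k hk
    simp only [Finset.mem_Icc] at hk
    omega

lemma narayana_deriv_eval (n : ℕ) (hn : 0 < n) :
    (derivative (narayanaPoly n)).eval (-1)
      = ∑ j ∈ Finset.range n, (-1:ℝ)^j * (n.choose j) * ((n-1).choose j) := by
  unfold narayanaPoly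
  rw [derivative_sum]
  rw [eval_finset_sum]
  rw [Finset.sum_bij' (fun k (_ : k ∈ Finset.Icc 1 n) => k - 1)
    (fun j (_ : j ∈ Finset.range n) => j + 1)
    (by intro k hk; simp only [Finset.mem_Icc] at hk; simp only [Finset.mem_range]; omega)
    (by intro j hj; simp only [Finset.mem_range] at hj; simp only [Finset.mem_Icc]; omega)
    (by intro k hk; simp only [Finset.mem_Icc] at hk; omega)
    (by intro j hj; omega)]
  intro k hk
  simp only [Finset.mem_Icc] at hk
  obtain ⟨j, rfl⟩ : ∃ j, k = j + 1 := ⟨k - 1, by omega⟩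
  have hjn : j < n := by omega
  simp only [derivative_C_mul, derivative_X_pow, eval_mul, eval_C, eval_natCast, eval_pow, eval_X,
    Nat.add_sub_cancel]
  have key : (n.choose (j+1) : ℝ) * (j + 1) = n * ((n-1).choose j) := by
    have := Nat.add_one_mul_choose_eq (n-1) j
    have hn1 : n - 1 + 1 = n := by omega
    rw [hn1] at this
    exact_mod_cast this.symm
  have hn0 : (n : ℝ) ≠ 0 := Nat.cast_ne_zero.mpr hn.ne'
  field_simp
  push_cast
  linear_combination (n.choose j : ℝ) * key

lemma narayana_sum_eq_coeff (n : ℕ) (hn : 0 < n) :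
    ∑ j ∈ Finset.range n, (-1:ℝ)^j * (n.choose j) * ((n-1).choose j)
      = ((1 - X)^n * (1 + X)^(n-1) : Polynomial ℝ).coeff (n-1) := by
  rw [coeff_mul, Finset.Nat.sum_antidiagonal_eq_sum_range_succ_mk]
  have h : n - 1 + 1 = n := by omega
  rw [Nat.succ_eq_add_one, h]
  refine Finset.sum_congr rfl fun j hj => ?_
  simp only [Finset.mem_range] at hj
  rw [narayana_coeff_one_sub_X_pow, coeff_one_add_X_pow]
  have : (n-1) - ((n-1) - j) = j := by omega
  rw [← Nat.choose_symm (n := n-1) (k := (n-1) - j) (by omega), this]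

lemma narayana_factored (n : ℕ) (hn : 0 < n) :
    ((1 - X)^n * (1 + X)^(n-1) : Polynomial ℝ)
      = (1 - X) * (expand ℝ 2 ((1 - X)^(n-1))) := by
  have h2 : (expand ℝ 2) ((1 - X : Polynomial ℝ)^(n-1)) = (1 - X^2)^(n-1) := by
    rw [map_pow, map_sub, map_one, expand_X]
  rw [h2]
  obtain ⟨m, rfl⟩ : ∃ m, n = m + 1 := ⟨n - 1, by omega⟩
  simp only [Nat.add_sub_cancel]
  rw [show ((1 : Polynomial ℝ) - X^2) = (1 - X) * (1 + X) by ring, mul_pow, pow_succ]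
  ring

lemma narayana_coeff_final (m : ℕ) (hm : 0 < m) :
    (((1 : Polynomial ℝ) - X) * (expand ℝ 2 ((1 - X)^(m + m - 1)))).coeff (m + m - 1)
      = -((-1:ℝ)^(m-1) * ((m + m - 1).choose (m-1))) := by
  rw [sub_mul, one_mul, coeff_sub]
  have h1 : (expand ℝ 2 ((1 - X : Polynomial ℝ)^(m+m-1))).coeff (m+m-1) = 0 := by
    rw [coeff_expand (by norm_num)]
    have : ¬ (2 ∣ (m + m - 1)) := by omega
    simp [this]
  obtain ⟨d, hd⟩ : ∃ d, m + m - 1 = d + 1 := ⟨m + m - 2, by omega⟩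
  rw [h1, hd, coeff_X_mul, coeff_expand (by norm_num)]
  have h2 : 2 ∣ d := by omega
  have h3 : d / 2 = m - 1 := by omega
  simp only [h2, if_true, h3]
  rw [narayana_coeff_one_sub_X_pow]
  rw [← hd]
  ring

lemma narayana_deriv_ne (n : ℕ) (hn : 0 < n) (he : Even n) :
    (∑ j ∈ Finset.range n, (-1:ℝ)^j * (n.choose j) * ((n-1).choose j)) ≠ 0 := by
  obtain ⟨m, rfl⟩ := he
  have hm : 0 < m := by omega
  rw [narayana_sum_eq_coeff _ hn, narayana_factored _ hn, narayana_coeff_final m hm]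
  have hpos : 0 < ((m + m - 1).choose (m - 1)) := Nat.choose_pos (by omega)
  have : ((m + m - 1).choose (m-1) : ℝ) > 0 := by exact_mod_cast hpos
  rcases Nat.even_or_odd (m-1) with h | h
  · rw [h.neg_one_pow]; intro hc; simp at hc; linarith
  · rw [h.neg_one_pow]; intro hc; simp at hc; linarith

/-- For even positive n, -1 is a simple root of N_n(x). -/
theorem narayana_neg_one_simple_root (n : ℕ) (hn : 0 < n) (he : Even n) :
    (narayanaPoly n).eval (-1) = 0 ∧
      (Polynomial.derivative (narayanaPoly n)).eval (-1) ≠ 0 := by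
  refine ⟨narayana_eval_neg_one n hn he, ?_⟩
  rw [narayana_deriv_eval n hn]
  exact narayana_deriv_ne n hn he
end

section
/- For every n ≥ 3, the roots of N_{n-1}(x)/x strictly interlace the roots of N_n(x)/x: if ξ_1 < ξ_2 < ... < ξ_{n-2} are the roots of N_{n-1}(x)/x and η_1 < η_2 < ... < η_{n-1} those of N_n(x)/x, then η_1 < ξ_1 < η_2 < ξ_2 < ... < ξ_{n-2} < η_{n-1}. -/
set_option maxHeartbeats 1000000

open Polynomial

open Finset


lemma nar_coeff (n m : ℕ) : (narayanaPoly n).coeff m =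
    if 1 ≤ m ∧ m ≤ n then ((n.choose (m - 1) * n.choose m : ℝ) / n) else 0 := by
  rw [narayanaPoly, finset_sum_coeff]
  simp only [coeff_C_mul, coeff_X_pow, mul_ite, mul_one, mul_zero, eq_comm (a := m)]
  rw [Finset.sum_ite_eq' (Finset.Icc 1 n) m]
  simp [Finset.mem_Icc]

lemma nar_coeff_top (n : ℕ) (hn : 1 ≤ n) : (narayanaPoly n).coeff n = 1 := by
  rw [nar_coeff]
  simp only [hn, le_refl, and_self, if_true, Nat.choose_self, Nat.cast_one]
  rw [Nat.choose_symm hn, Nat.choose_one_right]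
  have : (n:ℝ) ≠ 0 := by positivity
  field_simp

lemma nar_natDegree (n : ℕ) (hn : 1 ≤ n) : (narayanaPoly n).natDegree = n := by
  have hle : (narayanaPoly n).natDegree ≤ n := by
    apply natDegree_le_iff_coeff_eq_zero.2
    intro m hm
    rw [nar_coeff]
    simp [Nat.choose_eq_zero_of_lt hm]
  have h1 := nar_coeff_top n hn
  have hne : (narayanaPoly n).coeff n ≠ 0 := by rw [h1]; norm_num
  exact le_antisymm hle (le_natDegree_of_ne_zero hne)

lemma nar_ne_zero (n : ℕ) (hn : 1 ≤ n) : narayanaPoly n ≠ 0 := fun h => by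
  have := nar_coeff_top n hn; rw [h] at this; simp at this

lemma nar_pos (n : ℕ) (hn : 1 ≤ n) (x : ℝ) (hx : 0 < x) : 0 < (narayanaPoly n).eval x := by
  rw [narayanaPoly]
  simp only [eval_finset_sum, eval_mul, eval_C, eval_pow, eval_X]
  apply Finset.sum_pos'
  · intro k hk
    have : (0:ℝ) ≤ (n.choose (k-1) * n.choose k : ℝ) / n := by positivity
    have := pow_pos hx k
    positivity
  · refine ⟨1, by simp [hn], ?_⟩
    have hn' : (0:ℝ) < n := by positivity
    simp only [Nat.choose_one_right, Nat.sub_self, Nat.choose_zero_right]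
    have : (0:ℝ) < (1 * n : ℝ)/n := by field_simp; norm_num
    simp at this ⊢
    positivity


lemma coreNar (P M x0 x1 x2 x3 : ℝ)
    (R0 : (P+1)*x1 = (M-P)*x0) (R1 : (P+2)*x2 = (M-P-1)*x1) (R2 : (P+3)*x3 = (M-P-2)*x2) :
    (2*P-M+2)*((x0+x1)*(x1+x2)) - (2*P-M+4)*((x1+x2)*(x2+x3))
      = (M+1)*(x0*x1 - 2*(x1*x2) + x2*x3) := by
  linear_combination (x1+x2)*R0 + (x0+x1-x2-x3)*R1 - (x1+x2)*R2

lemma chooseR (M k : ℕ) : ((k:ℝ)+1) * (M.choose (k+1) : ℝ) = ((M:ℝ) - k) * (M.choose k) := by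
  rcases le_or_gt (k+1) M with h | h
  · have := Nat.choose_succ_right_eq M k
    have hk : k ≤ M := by omega
    have : ((M.choose (k+1) * (k+1) : ℕ) : ℝ) = ((M.choose k * (M - k) : ℕ) : ℝ) := by
      rw [this]
    push_cast [Nat.cast_sub hk] at this
    linarith
  · rcases Nat.eq_or_lt_of_le (Nat.lt_iff_add_one_le.mp h) with h' | h'
    · have hM : M = k := by omega
      subst hM
      simp [Nat.choose_succ_self]
    · have h1 : M.choose (k+1) = 0 := Nat.choose_eq_zero_of_lt (by omega)
      have h2 : M.choose k = 0 := Nat.choose_eq_zero_of_lt (by omega)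
      simp [h1, h2]

lemma pascalR (M k : ℕ) : (((M+1).choose (k+1) : ℕ) : ℝ) = (M.choose k : ℝ) + (M.choose (k+1)) := by
  rw [Nat.choose_succ_succ]
  push_cast
  ring

noncomputable def Aa (n k : ℕ) : ℝ := if k = 0 then 0 else (n.choose (k - 1) * n.choose k : ℝ)
noncomputable def hh (n k : ℕ) : ℝ := (2*(k:ℝ) - n - 1) * Aa n k / n

lemma Aa_succ (n k : ℕ) : Aa n (k+1) = (n.choose k : ℝ) * (n.choose (k+1)) := by
  rw [Aa, if_neg (Nat.succ_ne_zero k), Nat.add_sub_cancel]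

lemma scalarNar (n m : ℕ) (hn : 1 ≤ n) :
    hh n (m-1) - hh n m = Aa (n-1) (m-2) - 2 * Aa (n-1) (m-1) + Aa (n-1) m := by
  obtain ⟨M, rfl⟩ : ∃ M, n = M + 1 := ⟨n-1, by omega⟩
  have hn0 : ((M:ℝ)+1) ≠ 0 := by positivity
  have hn0' : (((M+1:ℕ)):ℝ) ≠ 0 := by push_cast; positivity
  match m with
  | 0 => simp [Aa, hh]
  | 1 =>
      simp only [show (1:ℕ)-1 = 0 from rfl, show (1:ℕ)-2 = 0 from rfl, Aa, hh,
        Nat.add_sub_cancel, if_true, if_neg one_ne_zero]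
      simp only [Nat.choose_one_right, Nat.choose_zero_right, Nat.sub_self]
      push_cast
      field_simp
      ring
  | (t+2) =>
      set x0 : ℝ := if t = 0 then 0 else (M.choose (t-1) : ℝ) with hx0
      set x1 : ℝ := (M.choose t : ℝ) with hx1
      set x2 : ℝ := (M.choose (t+1) : ℝ) with hx2
      set x3 : ℝ := (M.choose (t+2) : ℝ) with hx3
      set P : ℝ := (t:ℝ) - 1 with hP
      have R0 : (P+1)*x1 = ((M:ℝ)-P)*x0 := by
        rcases Nat.eq_zero_or_pos t with rfl | ht
        · simp [hx0, hP]
        · obtain ⟨s, rfl⟩ : ∃ s, t = s + 1 := ⟨t-1, by omega⟩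
          have := chooseR M s
          simp only [hx0, hP, hx1, if_neg (Nat.succ_ne_zero s), Nat.add_sub_cancel]
          push_cast
          push_cast at this
          linarith
      have R1 : (P+2)*x2 = ((M:ℝ)-P-1)*x1 := by
        have := chooseR M t
        simp only [hP, hx1, hx2]
        push_cast at this ⊢
        linarith
      have R2 : (P+3)*x3 = ((M:ℝ)-P-2)*x2 := by
        have := chooseR M (t+1)
        simp only [hP, hx2, hx3]
        push_cast at this ⊢
        linarith
      have hcore := coreNar P M x0 x1 x2 x3 R0 R1 R2
      have e1 : ((M+1).choose t : ℝ) = x0 + x1 := by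
        rcases Nat.eq_zero_or_pos t with rfl | ht
        · simp [hx0, hx1]
        · obtain ⟨s, rfl⟩ : ∃ s, t = s + 1 := ⟨t-1, by omega⟩
          rw [pascalR M s]
          simp [hx0, hx1]
      have e2 : ((M+1).choose (t+1) : ℝ) = x1 + x2 := pascalR M t
      have e3 : ((M+1).choose (t+2) : ℝ) = x2 + x3 := pascalR M (t+1)
      show hh (M+1) (t+1) - hh (M+1) (t+2) = Aa M t - 2 * Aa M (t+1) + Aa M (t+2)
      have hA1 : Aa (M+1) (t+1) = (x0+x1)*(x1+x2) := by
        rw [Aa_succ, e1, e2]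
      have hA2 : Aa (M+1) (t+2) = (x1+x2)*(x2+x3) := by
        rw [show t+2 = (t+1)+1 from rfl, Aa_succ, e2, e3]
      have hB0 : Aa M t = x0*x1 := by
        rcases Nat.eq_zero_or_pos t with rfl | ht
        · simp [Aa, hx0]
        · obtain ⟨s, rfl⟩ : ∃ s, t = s + 1 := ⟨t-1, by omega⟩
          rw [Aa_succ, hx0, if_neg (Nat.succ_ne_zero s), Nat.add_sub_cancel, hx1]
      have hB1 : Aa M (t+1) = x1*x2 := by rw [Aa_succ, hx1, hx2]
      have hB2 : Aa M (t+2) = x2*x3 := by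
        rw [show t+2 = (t+1)+1 from rfl, Aa_succ, hx2, hx3]
      simp only [hh]
      rw [hA1, hA2, hB0, hB1, hB2]
      have hc1 : (2*((t+1:ℕ):ℝ) - ((M+1:ℕ):ℝ) - 1) = 2*P-(M:ℝ)+2 := by
        push_cast [hP]; ring
      have hc2 : (2*((t+2:ℕ):ℝ) - ((M+1:ℕ):ℝ) - 1) = 2*P-(M:ℝ)+4 := by
        push_cast [hP]; ring
      rw [hc1, hc2, div_sub_div_same, div_eq_iff hn0']
      push_cast
      linear_combination hcore

lemma Aa_eq_zero (n k : ℕ) (h : k = 0 ∨ n < k) : Aa n k = 0 := by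
  rcases h with rfl | h
  · simp [Aa]
  · rcases Nat.eq_zero_or_pos k with rfl | hk
    · simp [Aa]
    · rw [Aa, if_neg (by omega)]
      rw [Nat.choose_eq_zero_of_lt h]
      simp

lemma coeff_shift (a b s : ℕ) (g : ℕ → ℝ) (m : ℕ) :
    (∑ k ∈ Finset.Icc a b, C (g k) * X^(k+s)).coeff m =
    if a + s ≤ m ∧ m ≤ b + s then g (m - s) else 0 := by
  rw [Polynomial.finset_sum_coeff]
  simp only [Polynomial.coeff_C_mul, Polynomial.coeff_X_pow, mul_ite, mul_one, mul_zero]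
  rcases le_or_gt s m with hs | hs
  · have hiff : ∀ k : ℕ, (m = k + s) ↔ (k = m - s) := by intro k; omega
    simp only [hiff]
    rw [Finset.sum_ite_eq' (Finset.Icc a b) (m - s)]
    simp only [Finset.mem_Icc]
    congr 1
    · simp only [eq_iff_iff]; omega
  · rw [Finset.sum_eq_zero, if_neg (by omega)]
    intro k hk
    rw [if_neg (by omega)]

lemma hh_eq_zero (n k : ℕ) (h : k = 0 ∨ n < k) : hh n k = 0 := by
  rw [hh, Aa_eq_zero n k h]; simp

lemma ite_collapse (c : Prop) [Decidable c] (v : ℝ) (h : ¬ c → v = 0) :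
    (if c then v else 0) = v := by
  split_ifs with hc
  · rfl
  · exact (h hc).symm

noncomputable def Qp (n : ℕ) : Polynomial ℝ :=
  ∑ k ∈ Finset.Icc 1 n, C (Aa n k) * X ^ k

lemma Qp_eq (n : ℕ) (hn : 1 ≤ n) : Qp n = C ((n:ℝ)) * narayanaPoly n := by
  rw [Qp, narayanaPoly, Finset.mul_sum]
  refine Finset.sum_congr rfl ?_
  intro k hk
  obtain ⟨j, rfl⟩ : ∃ j, k = j + 1 := ⟨k - 1, by simp at hk; omega⟩
  have hn0 : (n:ℝ) ≠ 0 := by positivity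
  rw [Aa_succ, Nat.add_sub_cancel, ← mul_assoc, ← map_mul, mul_div_cancel₀ _ hn0]

lemma lhs_form (M : ℕ) :
    C 2 * (X * (X - 1)) * derivative (Qp (M+1)) + C ((M:ℝ)+2) * (1 - X) * Qp (M+1)
    = (∑ k ∈ Finset.Icc 1 (M+1), C ((2*(k:ℝ) - (M:ℝ) - 2) * Aa (M+1) k) * X^(k+1))
      - (∑ k ∈ Finset.Icc 1 (M+1), C ((2*(k:ℝ) - (M:ℝ) - 2) * Aa (M+1) k) * X^(k+0)) := by
  rw [Qp, derivative_sum, Finset.mul_sum, Finset.mul_sum,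
    ← Finset.sum_sub_distrib, ← Finset.sum_add_distrib]
  refine Finset.sum_congr rfl ?_
  intro k hk
  obtain ⟨j, rfl⟩ : ∃ j, k = j + 1 := ⟨k - 1, by simp at hk; omega⟩
  rw [derivative_C_mul, derivative_X_pow, Nat.add_sub_cancel]
  simp only [map_sub, map_mul, map_add, map_neg, map_one, map_ofNat, map_natCast,
    Nat.cast_add, Nat.cast_one]
  ring

lemma rhs_form (M : ℕ) :
    C ((M:ℝ)+1) * ((X-1)^2 * Qp M)
    = (∑ k ∈ Finset.Icc 1 M, C (((M:ℝ)+1) * Aa M k) * X^(k+2))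
      - (∑ k ∈ Finset.Icc 1 M, C (2 * (((M:ℝ)+1) * Aa M k)) * X^(k+1))
      + (∑ k ∈ Finset.Icc 1 M, C (((M:ℝ)+1) * Aa M k) * X^(k+0)) := by
  rw [Qp, Finset.mul_sum, Finset.mul_sum, ← Finset.sum_sub_distrib, ← Finset.sum_add_distrib]
  refine Finset.sum_congr rfl ?_
  intro k hk
  simp only [map_mul, map_add, map_one, map_ofNat, map_natCast, Nat.cast_add, Nat.cast_one]
  ring

lemma gg_scalar (M m : ℕ) :
    (2*((m-1:ℕ):ℝ) - (M:ℝ) - 2) * Aa (M+1) (m-1) - (2*(m:ℝ) - (M:ℝ) - 2) * Aa (M+1) m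
    = ((M:ℝ)+1) * Aa M (m-2) - 2 * (((M:ℝ)+1) * Aa M (m-1)) + ((M:ℝ)+1) * Aa M m := by
  have hMne : ((M+1:ℕ):ℝ) ≠ 0 := by positivity
  have h' := scalarNar (M+1) m (by omega)
  simp only [Nat.add_sub_cancel, hh] at h'
  rw [div_sub_div_same, div_eq_iff hMne] at h'
  push_cast at h' ⊢
  linear_combination h'

lemma keyQ (M : ℕ) :
    C ((M:ℝ)+1) * ((X-1)^2 * Qp M)
    = C 2 * (X * (X - 1)) * derivative (Qp (M+1)) + C ((M:ℝ)+2) * (1 - X) * Qp (M+1) := by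
  rw [lhs_form, rhs_form]
  ext m
  rw [coeff_add, coeff_sub, coeff_sub, coeff_shift, coeff_shift, coeff_shift,
    coeff_shift, coeff_shift]
  rw [ite_collapse _ _ (fun h => by rw [Aa_eq_zero M (m-2) (by omega)]; ring),
    ite_collapse _ _ (fun h => by rw [Aa_eq_zero M (m-1) (by omega)]; ring),
    ite_collapse _ _ (fun h => by rw [Aa_eq_zero M (m-0) (by omega)]; ring),
    ite_collapse _ _ (fun h => by rw [Aa_eq_zero (M+1) (m-1) (by omega)]; ring),
    ite_collapse _ _ (fun h => by rw [Aa_eq_zero (M+1) (m-0) (by omega)]; ring)]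
  simp only [Nat.sub_zero]
  have := gg_scalar M m
  linarith

lemma deriv_ne_zero_of_card_roots {p : Polynomial ℝ} (hp : p ≠ 0) (T : Finset ℝ)
    (hT : ∀ a ∈ T, p.IsRoot a) (hcard : p.natDegree ≤ T.card) {a : ℝ} (ha : a ∈ T) :
    p.derivative.eval a ≠ 0 := by
  intro hda
  have h1 : (X - C a)^2 ∣ p := by
    obtain ⟨q, hq⟩ := dvd_iff_isRoot.mpr (hT a ha)
    have hq' : q.eval a = 0 := by
      have hd := congrArg derivative hq
      rw [derivative_mul, derivative_sub, derivative_X, derivative_C] at hd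
      have := congrArg (eval a) hd
      simp [hT a ha] at this ⊢
      rw [hda] at this
      linarith [this]
    obtain ⟨r, hr⟩ := dvd_iff_isRoot.mpr hq'
    exact ⟨r, by rw [hq, hr]; ring⟩
  have h2 : 2 ≤ rootMultiplicity a p := (le_rootMultiplicity_iff hp).2 h1
  have hsub : T ⊆ p.roots.toFinset := fun b hb =>
    Multiset.mem_toFinset.2 ((mem_roots hp).2 (hT b hb))
  have hsum : ∑ b ∈ T, p.roots.count b ≤ Multiset.card p.roots := by
    calc ∑ b ∈ T, p.roots.count b ≤ ∑ b ∈ p.roots.toFinset, p.roots.count b :=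
          Finset.sum_le_sum_of_subset hsub
      _ = Multiset.card p.roots := Multiset.toFinset_sum_count_eq _
  have hlt : T.card < ∑ b ∈ T, p.roots.count b := by
    have h3 : ∀ b ∈ T, 1 ≤ p.roots.count b := fun b hb =>
      Multiset.one_le_count_iff_mem.2 ((mem_roots hp).2 (hT b hb))
    have h4 : ∃ b ∈ T, 1 < p.roots.count b := ⟨a, ha, by rw [count_roots]; omega⟩
    calc T.card = ∑ _b ∈ T, 1 := by simp
      _ < _ := Finset.sum_lt_sum h3 h4
  have := p.card_roots'
  omega

lemma eval_sign_const {p : Polynomial ℝ} {a b : ℝ} (hab : a ≤ b)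
    (h : ∀ x, a ≤ x → x ≤ b → p.eval x ≠ 0) : 0 < p.eval a * p.eval b := by
  have ha := h a le_rfl hab
  have hb := h b hab le_rfl
  rcases lt_trichotomy (p.eval a * p.eval b) 0 with hlt | heq | hgt
  · exfalso
    rcases mul_neg_iff.1 hlt with ⟨hpa, hpb⟩ | ⟨hpa, hpb⟩
    · have : (0:ℝ) ∈ Set.Icc (p.eval b) (p.eval a) := ⟨le_of_lt hpb, le_of_lt hpa⟩
      obtain ⟨x, hx, hx0⟩ := intermediate_value_Icc' hab p.continuousOn this
      exact h x hx.1 hx.2 hx0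
    · have : (0:ℝ) ∈ Set.Icc (p.eval a) (p.eval b) := ⟨le_of_lt hpa, le_of_lt hpb⟩
      obtain ⟨x, hx, hx0⟩ := intermediate_value_Icc hab p.continuousOn this
      exact h x hx.1 hx.2 hx0
  · exact absurd (mul_eq_zero.1 heq) (by push_neg; exact ⟨ha, hb⟩)
  · exact hgt

lemma deriv_sign_right {p : Polynomial ℝ} {a b : ℝ} (hab : a < b) (hroot : p.eval a = 0)
    (h : ∀ x, a < x → x ≤ b → p.eval x ≠ 0) (hd : p.derivative.eval a ≠ 0) :
    0 < p.derivative.eval a * p.eval b := by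
  obtain ⟨q, hq⟩ := dvd_iff_isRoot.mpr hroot
  have hda : p.derivative.eval a = q.eval a := by
    have hdq := congrArg derivative hq
    rw [derivative_mul, derivative_sub, derivative_X, derivative_C] at hdq
    have := congrArg (eval a) hdq
    simp at this
    try linarith [this]
  have hqz : ∀ x, a ≤ x → x ≤ b → q.eval x ≠ 0 := by
    intro x hax hxb
    rcases eq_or_lt_of_le hax with rfl | hax'
    · rw [← hda]; exact hd
    · intro hq0
      apply h x hax' hxb
      rw [hq, eval_mul, hq0, mul_zero]
  have hqs := eval_sign_const (le_of_lt hab) hqz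
  have hpb : p.eval b = (b - a) * q.eval b := by rw [hq]; simp; try ring
  rw [hda, hpb]
  nlinarith [hqs, sub_pos.2 hab]

lemma deriv_sign_left {p : Polynomial ℝ} {a b : ℝ} (hab : a < b) (hroot : p.eval b = 0)
    (h : ∀ x, a ≤ x → x < b → p.eval x ≠ 0) (hd : p.derivative.eval b ≠ 0) :
    p.derivative.eval b * p.eval a < 0 := by
  obtain ⟨q, hq⟩ := dvd_iff_isRoot.mpr hroot
  have hdb : p.derivative.eval b = q.eval b := by
    have hdq := congrArg derivative hq
    rw [derivative_mul, derivative_sub, derivative_X, derivative_C] at hdq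
    have := congrArg (eval b) hdq
    simp at this
    try linarith [this]
  have hqz : ∀ x, a ≤ x → x ≤ b → q.eval x ≠ 0 := by
    intro x hax hxb
    rcases eq_or_lt_of_le hxb with rfl | hxb'
    · rw [← hdb]; exact hd
    · intro hq0
      apply h x hax hxb'
      rw [hq, eval_mul, hq0, mul_zero]
  have hqs := eval_sign_const (le_of_lt hab) hqz
  have hpa : p.eval a = (a - b) * q.eval a := by rw [hq]; simp; try ring
  rw [hdb, hpa]
  nlinarith [hqs, sub_pos.2 hab]

lemma key_eval (M : ℕ) (hM : 1 ≤ M) (x : ℝ) :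
    (M:ℝ) * (x-1)^2 * (narayanaPoly M).eval x
    = 2 * (x * (x - 1)) * ((derivative (narayanaPoly (M+1))).eval x)
      + ((M:ℝ)+2) * (1 - x) * (narayanaPoly (M+1)).eval x := by
  have h := congrArg (eval x) (keyQ M)
  rw [Qp_eq M hM, Qp_eq (M+1) (by omega), derivative_C_mul] at h
  simp only [eval_mul, eval_add, eval_sub, eval_pow, eval_X, eval_one, eval_C,
    eval_ofNat] at h
  have hne : ((M:ℝ)+1) ≠ 0 := by positivity
  apply mul_left_cancel₀ hne
  push_cast at h ⊢
  linear_combination h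

/-- The roots of N_{n-1}(x)/x strictly interlace those of N_n(x)/x: if ξ_0 < … < ξ_{n-3}
are the nonzero roots of N_{n-1} and η_0 < … < η_{n-2} the nonzero roots of N_n, then
η_i < ξ_i < η_{i+1} for each i. -/
theorem narayana_interlacing (n : ℕ) (hn : 3 ≤ n) (ξ η : ℕ → ℝ)
    (hξmono : ∀ i j, i < j → j < n - 2 → ξ i < ξ j)
    (hηmono : ∀ i j, i < j → j < n - 1 → η i < η j)
    (hξ : {x : ℝ | x ≠ 0 ∧ (narayanaPoly (n - 1)).eval x = 0} = ξ '' {i | i < n - 2})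
    (hη : {x : ℝ | x ≠ 0 ∧ (narayanaPoly n).eval x = 0} = η '' {i | i < n - 1}) :
    ∀ i, i < n - 2 → η i < ξ i ∧ ξ i < η (i + 1) := by
  obtain ⟨M, rfl⟩ : ∃ M, n = M + 2 := ⟨n - 2, by omega⟩
  have hM : 1 ≤ M := by omega
  have hsub1 : M + 2 - 1 = M + 1 := rfl
  have hsub2 : M + 2 - 2 = M := rfl
  simp only [hsub1, hsub2] at hξmono hηmono hξ hη ⊢
  set p := narayanaPoly (M+2) with hp
  set q := narayanaPoly (M+1) with hq
  -- root facts for η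
  have hηmem : ∀ i, i < M + 1 → η i ≠ 0 ∧ p.eval (η i) = 0 := by
    intro i hi
    have : η i ∈ {x : ℝ | x ≠ 0 ∧ p.eval x = 0} := by
      rw [hη]; exact ⟨i, hi, rfl⟩
    exact this
  have hηneg : ∀ i, i < M + 1 → η i < 0 := by
    intro i hi
    rcases lt_trichotomy (η i) 0 with h | h | h
    · exact h
    · exact absurd h (hηmem i hi).1
    · exact absurd (hηmem i hi).2 (ne_of_gt (nar_pos (M+2) (by omega) _ h))
  -- simplicity
  have hpne : p ≠ 0 := nar_ne_zero (M+2) (by omega)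
  have hpdeg : p.natDegree = M + 2 := nar_natDegree (M+2) (by omega)
  have hinj : Set.InjOn η (Finset.range (M+1) : Finset ℕ) := by
    intro i hi j hj hij
    simp only [Finset.coe_range, Set.mem_Iio] at hi hj
    by_contra hne
    rcases Nat.lt_or_ge i j with h | h
    · exact absurd hij (ne_of_lt (hηmono i j h hj))
    · have : j < i := by omega
      exact absurd hij.symm (ne_of_lt (hηmono j i this hi))
  have hT0 : (0:ℝ) ∉ (Finset.range (M+1)).image η := by
    simp only [Finset.mem_image, Finset.mem_range]
    rintro ⟨i, hi, hi0⟩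
    exact (hηmem i hi).1 hi0
  have hTcard : (insert (0:ℝ) ((Finset.range (M+1)).image η)).card = M + 2 := by
    rw [Finset.card_insert_of_notMem hT0, Finset.card_image_of_injOn hinj]
    simp
  have hTroot : ∀ a ∈ insert (0:ℝ) ((Finset.range (M+1)).image η), p.IsRoot a := by
    intro a ha
    rcases Finset.mem_insert.1 ha with rfl | ha
    · show p.eval 0 = 0
      rw [← Polynomial.coeff_zero_eq_eval_zero, hp, nar_coeff]
      simp
    · obtain ⟨i, hi, rfl⟩ := Finset.mem_image.1 ha
      exact (hηmem i (Finset.mem_range.1 hi)).2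
  have hd : ∀ i, i < M + 1 → (derivative p).eval (η i) ≠ 0 := by
    intro i hi
    exact deriv_ne_zero_of_card_roots hpne _ hTroot (by rw [hTcard, hpdeg])
      (Finset.mem_insert_of_mem (Finset.mem_image.2 ⟨i, Finset.mem_range.2 hi, rfl⟩))
  -- sign identity at roots
  have hkey : ∀ i, i < M + 1 →
      ((M:ℝ)+1) * (η i - 1)^2 * q.eval (η i) = 2 * (η i * (η i - 1)) * (derivative p).eval (η i) := by
    intro i hi
    have h := key_eval (M+1) (by omega) (η i)
    rw [(hηmem i hi).2] at h
    push_cast at h ⊢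
    linarith
  -- no roots of p in the gaps
  have hgap : ∀ i, i < M → ∀ x, η i < x → x < η (i+1) → p.eval x ≠ 0 := by
    intro i hi x h1 h2 hx0
    have hxneg : x < 0 := lt_trans h2 (hηneg (i+1) (by omega))
    have : x ∈ {x : ℝ | x ≠ 0 ∧ p.eval x = 0} := ⟨ne_of_lt hxneg, hx0⟩
    rw [hη] at this
    obtain ⟨j, hj, rfl⟩ := this
    simp only [Set.mem_setOf_eq] at hj
    rcases Nat.lt_or_ge j (i+1) with h | h
    · rcases Nat.lt_or_ge j i with h' | h'
      · exact absurd h1 (not_lt.2 (le_of_lt (hηmono j i h' (by omega))))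
      · have : j = i := by omega
        subst this
        exact lt_irrefl _ h1
    · rcases Nat.eq_or_lt_of_le h with h' | h'
      · subst h'
        exact lt_irrefl _ h2
      · exact absurd h2 (not_lt.2 (le_of_lt (hηmono (i+1) j h' hj)))
  -- opposite signs of q at consecutive roots, root of q in gap
  have hch : ∀ i, i < M → ∃ j, j < M ∧ η i < ξ j ∧ ξ j < η (i+1) := by
    intro i hi
    have hii : η i < η (i+1) := hηmono i (i+1) (by omega) (by omega)
    set c := (η i + η (i+1))/2 with hc
    have hc1 : η i < c := by rw [hc]; linarith
    have hc2 : c < η (i+1) := by rw [hc]; linarith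
    have hA : 0 < (derivative p).eval (η i) * p.eval c :=
      deriv_sign_right hc1 (hηmem i (by omega)).2
        (fun x hx1 hx2 => hgap i hi x hx1 (lt_of_le_of_lt hx2 hc2)) (hd i (by omega))
    have hB : (derivative p).eval (η (i+1)) * p.eval c < 0 :=
      deriv_sign_left hc2 (hηmem (i+1) (by omega)).2
        (fun x hx1 hx2 => hgap i hi x (lt_of_lt_of_le hc1 hx1) hx2) (hd (i+1) (by omega))
    have hwne : p.eval c ≠ 0 := by
      intro h0
      rw [h0, mul_zero] at hA
      exact lt_irrefl _ hA
    have huv : (derivative p).eval (η i) * (derivative p).eval (η (i+1)) < 0 := by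
      nlinarith [hA, hB, sq_nonneg (p.eval c)]
    have hsi := hηneg i (by omega)
    have hti := hηneg (i+1) (by omega)
    have hs1 : 0 < η i * (η i - 1) := by nlinarith
    have ht1 : 0 < η (i+1) * (η (i+1) - 1) := by nlinarith
    have hab : q.eval (η i) * q.eval (η (i+1)) < 0 := by
      have e1 := hkey i (by omega)
      have e2 := hkey (i+1) (by omega)
      have e12 : (((M:ℝ)+1) * (η i - 1)^2 * q.eval (η i)) *
          (((M:ℝ)+1) * (η (i+1) - 1)^2 * q.eval (η (i+1)))
          = (2 * (η i * (η i - 1)) * (derivative p).eval (η i)) *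
            (2 * (η (i+1) * (η (i+1) - 1)) * (derivative p).eval (η (i+1))) := by
        rw [e1, e2]
      have hMpos : (0:ℝ) < (M:ℝ)+1 := by positivity
      have hsq1 : (0:ℝ) < (η i - 1)^2 := by nlinarith
      have hsq2 : (0:ℝ) < (η (i+1) - 1)^2 := by nlinarith
      have hRHS : (2 * (η i * (η i - 1)) * (derivative p).eval (η i)) *
            (2 * (η (i+1) * (η (i+1) - 1)) * (derivative p).eval (η (i+1))) < 0 := by
        nlinarith [mul_pos hs1 ht1, huv]
      have hLHS := e12.trans_lt hRHS
      by_contra hcon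
      push_neg at hcon
      have hC : (0:ℝ) < (((M:ℝ)+1) * (η i - 1)^2) * (((M:ℝ)+1) * (η (i+1) - 1)^2) :=
        mul_pos (mul_pos hMpos hsq1) (mul_pos hMpos hsq2)
      have h2 : 0 ≤ (((M:ℝ)+1) * (η i - 1)^2) * (((M:ℝ)+1) * (η (i+1) - 1)^2) *
          (q.eval (η i) * q.eval (η (i+1))) := mul_nonneg (le_of_lt hC) hcon
      have hring : (((M:ℝ)+1) * (η i - 1)^2 * q.eval (η i)) *
          (((M:ℝ)+1) * (η (i+1) - 1)^2 * q.eval (η (i+1)))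
          = (((M:ℝ)+1) * (η i - 1)^2) * (((M:ℝ)+1) * (η (i+1) - 1)^2) *
            (q.eval (η i) * q.eval (η (i+1))) := by ring
      linarith [hLHS, h2, hring.symm.trans_lt hLHS]
    -- IVT for q
    have hLne : q.eval (η i) ≠ 0 := by
      intro h0; rw [h0, zero_mul] at hab; exact lt_irrefl _ hab
    have hRne : q.eval (η (i+1)) ≠ 0 := by
      intro h0; rw [h0, mul_zero] at hab; exact lt_irrefl _ hab
    have hriv : ∃ r, r ∈ Set.Icc (η i) (η (i+1)) ∧ q.eval r = 0 := by
      rcases lt_or_gt_of_ne hLne with hL | hL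
      · have hR : 0 < q.eval (η (i+1)) := by nlinarith [hab]
        obtain ⟨r, hr, hr0⟩ := intermediate_value_Icc (le_of_lt hii) q.continuousOn
          ⟨le_of_lt hL, le_of_lt hR⟩
        exact ⟨r, hr, hr0⟩
      · have hR : q.eval (η (i+1)) < 0 := by nlinarith [hab]
        obtain ⟨r, hr, hr0⟩ := intermediate_value_Icc' (le_of_lt hii) q.continuousOn
          ⟨le_of_lt hR, le_of_lt hL⟩
        exact ⟨r, hr, hr0⟩
    obtain ⟨r, ⟨hr1, hr2⟩, hr0⟩ := hriv
    have hrlt1 : η i < r := lt_of_le_of_ne hr1 (fun h => hLne (h ▸ hr0))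
    have hrlt2 : r < η (i+1) := lt_of_le_of_ne hr2 (fun h => hRne (h.symm ▸ hr0))
    have hrne : r ≠ 0 := ne_of_lt (lt_trans hrlt2 (hηneg (i+1) (by omega)))
    have : r ∈ {x : ℝ | x ≠ 0 ∧ q.eval x = 0} := ⟨hrne, hr0⟩
    rw [hξ] at this
    obtain ⟨j, hj, rfl⟩ := this
    exact ⟨j, hj, hrlt1, hrlt2⟩
  -- choice and monotone index argument
  have hch' : ∀ i : ℕ, ∃ j, i < M → (j < M ∧ η i < ξ j ∧ ξ j < η (i+1)) := by
    intro i
    by_cases h : i < M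
    · obtain ⟨j, hj⟩ := hch i h
      exact ⟨j, fun _ => hj⟩
    · exact ⟨0, fun h' => absurd h' h⟩
  choose σ hσ using hch'
  have hσmono : ∀ i j, i < j → j < M → σ i < σ j := by
    intro i j hij hj
    have hi := hσ i (by omega)
    have hjj := hσ j hj
    have h1 : ξ (σ i) < η (i+1) := hi.2.2
    have h2 : η j < ξ (σ j) := hjj.2.1
    have h3 : η (i+1) ≤ η j := by
      rcases Nat.eq_or_lt_of_le hij with h | h
      · exact le_of_eq (congrArg η h)
      · exact le_of_lt (hηmono (i+1) j h (by omega))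
    have hlt : ξ (σ i) < ξ (σ j) := by linarith
    by_contra hcon
    push_neg at hcon
    rcases Nat.eq_or_lt_of_le hcon with h | h
    · rw [h] at hlt; exact lt_irrefl _ hlt
    · exact absurd (hξmono (σ j) (σ i) h hi.1) (not_lt.2 (le_of_lt hlt))
  have hlow : ∀ i, i < M → i ≤ σ i := by
    intro i
    induction i with
    | zero => intro _; exact Nat.zero_le _
    | succ k ih =>
        intro hk
        have h1 := ih (by omega)
        have h2 := hσmono k (k+1) (by omega) hk
        omega
  have hup : ∀ d i, i < M → M - 1 - i = d → σ i ≤ i := by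
    intro d
    induction d with
    | zero =>
        intro i hi hd
        have := (hσ i hi).1
        omega
    | succ d ih =>
        intro i hi hd
        have h1 := ih (i+1) (by omega) (by omega)
        have h2 := hσmono i (i+1) (by omega) (by omega)
        omega
  intro i hi
  have heq : σ i = i := le_antisymm (hup (M - 1 - i) i hi rfl) (hlow i hi)
  have := hσ i hi
  rw [heq] at this
  exact ⟨this.2.1, this.2.2⟩
end
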